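/- Let a ≥ 3 be an integer and φ: ℕ → (0,1). Define μ_a as the distribution of the random sum S = Σ_{n≥1} X_n·a^{−n}, where X_n are independent with P(X_n = 0) = (1+φ(n))/2 and P(X_n = 1) = (1−φ(n))/2. Then the Fourier transform satisfies |μ̂_a(a^k)|² ≥ (4/π²)·cos²(π/a) > 0 for every positive integer k; in particular μ̂_a(t) does not tend to 0 as |t| → ∞, i.e., μ_a is not a Rajchman measure. -/

import Mathlib

open Real MeasureTheory Filter


lemma dyadic_id (M : ℕ) :
    (∏ m ∈ Finset.range M, Real.cos (π / 2 ^ (m + 2))) *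
      (2 ^ M * Real.sin (π / 2 ^ (M + 1))) = 1 := by
  induction M with
  | zero => simp
  | succ N ih =>
    rw [Finset.prod_range_succ]
    have h2 : Real.sin (π / 2 ^ (N + 1)) =
        2 * Real.sin (π / 2 ^ (N + 2)) * Real.cos (π / 2 ^ (N + 2)) := by
      rw [← Real.sin_two_mul]
      congr 1
      field_simp
      ring
    rw [h2] at ih
    calc (∏ m ∈ Finset.range N, Real.cos (π / 2 ^ (m + 2))) * Real.cos (π / 2 ^ (N + 2)) *
          (2 ^ (N + 1) * Real.sin (π / 2 ^ (N + 1 + 1)))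
        = (∏ m ∈ Finset.range N, Real.cos (π / 2 ^ (m + 2))) *
          (2 ^ N * (2 * Real.sin (π / 2 ^ (N + 2)) * Real.cos (π / 2 ^ (N + 2)))) := by
          ring
      _ = 1 := ih

lemma dyadic_ge (M : ℕ) : 2 / π ≤ ∏ m ∈ Finset.range M, Real.cos (π / 2 ^ (m + 2)) := by
  have hπ := Real.pi_pos
  have hsinpos : 0 < Real.sin (π / 2 ^ (M + 1)) := by
    apply Real.sin_pos_of_pos_of_lt_pi
    · positivity
    · have h1 : (1:ℝ) < 2 ^ (M + 1) := by
        exact_mod_cast Nat.one_lt_two_pow (by omega)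
      rw [div_lt_iff₀ (by positivity)]
      nlinarith
  have hD : (0:ℝ) < 2 ^ M * Real.sin (π / 2 ^ (M + 1)) := by positivity
  have hDle : 2 ^ M * Real.sin (π / 2 ^ (M + 1)) ≤ π / 2 := by
    have hs : Real.sin (π / 2 ^ (M + 1)) ≤ π / 2 ^ (M + 1) :=
      Real.sin_le (by positivity)
    have : (2:ℝ) ^ M * (π / 2 ^ (M + 1)) = π / 2 := by
      rw [pow_succ]
      field_simp
    nlinarith [pow_pos (show (0:ℝ) < 2 by norm_num) M]
  have hid := dyadic_id M
  have hP : ∏ m ∈ Finset.range M, Real.cos (π / 2 ^ (m + 2)) =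
      1 / (2 ^ M * Real.sin (π / 2 ^ (M + 1))) := (eq_div_iff hD.ne').mpr hid
  rw [hP]
  calc 2 / π = 1 / (π / 2) := by rw [one_div_div]
    _ ≤ 1 / (2 ^ M * Real.sin (π / 2 ^ (M + 1))) :=
        one_div_le_one_div_of_le hD hDle

lemma cos_prod_ge (a : ℕ) (ha : 3 ≤ a) (M : ℕ) :
    2 / π * Real.cos (π / a) ≤ ∏ m ∈ Finset.range M, Real.cos (π / (a : ℝ) ^ (m + 1)) := by
  have hπ := Real.pi_pos
  have ha3 : (3:ℝ) ≤ (a:ℝ) := by exact_mod_cast ha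
  have hcos1 : Real.cos (π / a) ≤ 1 := Real.cos_le_one _
  have hcosnn : 0 ≤ Real.cos (π / a) := by
    apply Real.cos_nonneg_of_mem_Icc
    constructor
    · have h0 : (0:ℝ) ≤ π / a := by positivity
      linarith
    · rw [div_le_div_iff₀ (by linarith) (by norm_num)]; nlinarith
  have h2π : 2 / π ≤ 1 := by
    rw [div_le_one hπ]; linarith [Real.pi_gt_three]
  cases M with
  | zero =>
    simp only [Finset.range_zero, Finset.prod_empty]
    nlinarith [div_nonneg (by norm_num : (0:ℝ) ≤ 2) hπ.le]
  | succ N =>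
    rw [Finset.prod_range_succ']
    have key : 2 / π ≤ ∏ m ∈ Finset.range N, Real.cos (π / (a : ℝ) ^ (m + 1 + 1)) := by
      refine le_trans (dyadic_ge N) (Finset.prod_le_prod ?_ ?_)
      · intro m _
        apply Real.cos_nonneg_of_mem_Icc
        constructor
        · have h0 : (0:ℝ) ≤ π / 2 ^ (m + 2) := by positivity
          linarith
        · rw [div_le_div_iff₀ (by positivity) (by norm_num)]
          have : (4:ℝ) ≤ 2 ^ (m + 2) := by
            calc (4:ℝ) = 2 ^ 2 := by norm_num
            _ ≤ 2 ^ (m + 2) := by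
              apply pow_le_pow_right₀ (by norm_num); omega
          nlinarith
      · intro m _
        apply Real.cos_le_cos_of_nonneg_of_le_pi
        · positivity
        · rw [div_le_iff₀ (by positivity)]
          have h1 : (1:ℝ) ≤ 2 ^ (m + 2) := one_le_pow₀ (by norm_num)
          nlinarith
        · apply div_le_div_of_nonneg_left hπ.le (by positivity)
          calc (2:ℝ) ^ (m + 2) ≤ (a:ℝ) ^ (m + 2) := by
                apply pow_le_pow_left₀ (by norm_num); linarith
            _ = (a:ℝ) ^ (m + 1 + 1) := by ring_nf

    have h0 : Real.cos (π / (a:ℝ) ^ (0 + 1)) = Real.cos (π / a) := by norm_num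
    rw [h0]
    exact mul_le_mul_of_nonneg_right key hcosnn

lemma factor_abs_le_one (φ : ℝ) (hφ0 : 0 < φ) (hφ1 : φ < 1) (θ : ℝ) :
    ‖(((1 + φ) / 2 : ℝ) : ℂ) + (((1 - φ) / 2 : ℝ) : ℂ) *
      Complex.exp (2 * (π : ℂ) * Complex.I * (θ : ℂ))‖ ≤ 1 := by
  have hexp : 2 * (π : ℂ) * Complex.I * (θ : ℂ) = ((2 * π * θ : ℝ) : ℂ) * Complex.I := by
    push_cast; ring
  calc ‖_‖ ≤ ‖(((1 + φ) / 2 : ℝ) : ℂ)‖ +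
        ‖(((1 - φ) / 2 : ℝ) : ℂ) *
          Complex.exp (2 * (π : ℂ) * Complex.I * (θ : ℂ))‖ := norm_add_le _ _
    _ = (1 + φ) / 2 + (1 - φ) / 2 := by
        rw [norm_mul, hexp, Complex.norm_exp_ofReal_mul_I]
        rw [Complex.norm_real, Complex.norm_real, Real.norm_eq_abs, Real.norm_eq_abs]
        rw [abs_of_nonneg (by linarith), abs_of_nonneg (by linarith)]
        ring
    _ = 1 := by ring

lemma factor_abs_ge (φ : ℝ) (hφ0 : 0 < φ) (hφ1 : φ < 1) (θ : ℝ)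
    (hc : 0 ≤ Real.cos (π * θ)) :
    Real.cos (π * θ) ≤ ‖(((1 + φ) / 2 : ℝ) : ℂ) + (((1 - φ) / 2 : ℝ) : ℂ) *
      Complex.exp (2 * (π : ℂ) * Complex.I * (θ : ℂ))‖ := by
  have hexp : 2 * (π : ℂ) * Complex.I * (θ : ℂ) = ((2 * π * θ : ℝ) : ℂ) * Complex.I := by
    push_cast; ring
  rw [hexp, Complex.exp_mul_I, ← Complex.ofReal_cos, ← Complex.ofReal_sin]
  set z := (((1 + φ) / 2 : ℝ) : ℂ) + (((1 - φ) / 2 : ℝ) : ℂ) *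
      (((Real.cos (2 * π * θ) : ℝ) : ℂ) + ((Real.sin (2 * π * θ) : ℝ) : ℂ) * Complex.I) with hz
  have habs2 : ‖z‖ ^ 2 =
      ((1 + φ) / 2 + (1 - φ) / 2 * Real.cos (2 * π * θ)) ^ 2 +
      ((1 - φ) / 2 * Real.sin (2 * π * θ)) ^ 2 := by
    rw [Complex.sq_norm, Complex.normSq_apply, hz]
    simp only [Complex.add_re, Complex.add_im, Complex.mul_re, Complex.mul_im,
      Complex.ofReal_re, Complex.ofReal_im, Complex.I_re, Complex.I_im]
    ring
  have harg : 2 * π * θ = 2 * (π * θ) := by ring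
  rw [harg, Real.cos_two_mul, Real.sin_two_mul] at habs2
  have hpyth := Real.sin_sq_add_cos_sq (π * θ)
  have h2 : Real.cos (π * θ) ^ 2 ≤ ‖z‖ ^ 2 := by
    rw [habs2]
    have heq : ((1 + φ) / 2 + (1 - φ) / 2 * (2 * Real.cos (π * θ) ^ 2 - 1)) ^ 2 +
        ((1 - φ) / 2 * (2 * Real.sin (π * θ) * Real.cos (π * θ))) ^ 2 =
        Real.cos (π * θ) ^ 2 + φ ^ 2 * Real.sin (π * θ) ^ 2 := by
      linear_combination ((1 - φ) ^ 2 * Real.cos (π * θ) ^ 2 - φ ^ 2) * hpyth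
    rw [heq]
    nlinarith [sq_nonneg (φ * Real.sin (π * θ))]
  nlinarith [norm_nonneg z, h2, hc]

theorem not_rajchman_base_ge_three (a : ℕ) (ha : 3 ≤ a) (φ : ℕ → ℝ)
    (hφ : ∀ n, 0 < φ n ∧ φ n < 1)
    (μ : Measure ℝ) [IsProbabilityMeasure μ]
    (hμ : ∀ t : ℝ, (∫ x : ℝ, Complex.exp (2 * (π : ℂ) * Complex.I * (t : ℂ) * (x : ℂ)) ∂μ)
      = ∏' n : ℕ, ((((1 + φ (n + 1)) / 2 : ℝ) : ℂ) +
          (((1 - φ (n + 1)) / 2 : ℝ) : ℂ) *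
            Complex.exp (2 * (π : ℂ) * Complex.I * ((t / (a : ℝ) ^ (n + 1) : ℝ) : ℂ)))) :
    (∀ k : ℕ, 1 ≤ k →
        (4 / π ^ 2) * Real.cos (π / a) ^ 2 ≤
          ‖(∫ x : ℝ, Complex.exp
            (2 * (π : ℂ) * Complex.I * (((a : ℝ) ^ k : ℝ) : ℂ) * (x : ℂ)) ∂μ)‖ ^ 2) ∧
      0 < (4 / π ^ 2) * Real.cos (π / a) ^ 2 ∧
      ¬ Tendsto (fun t : ℝ => ∫ x : ℝ,
          Complex.exp (2 * (π : ℂ) * Complex.I * (t : ℂ) * (x : ℂ)) ∂μ)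
        (cocompact ℝ) (nhds 0) := by
  have hπ := Real.pi_pos
  have ha3 : (3:ℝ) ≤ (a:ℝ) := by exact_mod_cast ha
  have hapos : (0:ℝ) < (a:ℝ) := by linarith
  have hcospos : 0 < Real.cos (π / a) := by
    apply Real.cos_pos_of_mem_Ioo
    constructor
    · have h0 : (0:ℝ) < π / a := by positivity
      linarith
    · rw [div_lt_div_iff₀ hapos (by norm_num : (0:ℝ) < 2)]
      nlinarith
  have hcosle : Real.cos (π / a) ≤ 1 := Real.cos_le_one _
  have h2π : 2 / π ≤ 1 := by
    rw [div_le_one hπ]; linarith [Real.pi_gt_three]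
  set C : ℝ := 2 / π * Real.cos (π / a) with hCdef
  have hCpos : 0 < C := by
    apply mul_pos _ hcospos; positivity
  have hC1 : C ≤ 1 := by
    calc C ≤ 1 * 1 := mul_le_mul h2π hcosle hcospos.le (by norm_num)
      _ = 1 := by norm_num
  have hbound : (4 / π ^ 2) * Real.cos (π / a) ^ 2 = C ^ 2 := by
    rw [hCdef, mul_pow, div_pow]; norm_num
  have main : ∀ k : ℕ, 1 ≤ k →
      (4 / π ^ 2) * Real.cos (π / a) ^ 2 ≤
        ‖(∫ x : ℝ, Complex.exp
          (2 * (π : ℂ) * Complex.I * (((a : ℝ) ^ k : ℝ) : ℂ) * (x : ℂ)) ∂μ)‖ ^ 2 := by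
    intro k hk
    rw [hbound, hμ ((a:ℝ)^k)]
    set F : ℕ → ℂ := fun n => ((((1 + φ (n + 1)) / 2 : ℝ) : ℂ) +
          (((1 - φ (n + 1)) / 2 : ℝ) : ℂ) *
            Complex.exp (2 * (π : ℂ) * Complex.I *
              (((a:ℝ)^k / (a : ℝ) ^ (n + 1) : ℝ) : ℂ))) with hFdef
    have hFle1 : ∀ n, ‖F n‖ ≤ 1 := fun n =>
      factor_abs_le_one _ (hφ (n+1)).1 (hφ (n+1)).2 _
    have hFnn : ∀ n, 0 ≤ ‖F n‖ := fun n => norm_nonneg _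
    -- factors below k are 1
    have hFone : ∀ n, n + 1 ≤ k → F n = 1 := by
      intro n hn
      have hint : ((a:ℝ)^k / (a:ℝ)^(n+1)) = ((a ^ (k - (n+1)) : ℕ) : ℝ) := by
        rw [div_eq_iff (by positivity)]
        push_cast
        rw [← pow_add]
        congr 1
        omega
      have hexp1 : Complex.exp (2 * (π : ℂ) * Complex.I *
          (((a:ℝ)^k / (a : ℝ) ^ (n + 1) : ℝ) : ℂ)) = 1 := by
        rw [hint]
        rw [← Complex.exp_nat_mul_two_pi_mul_I (a ^ (k - (n+1)))]
        congr 1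
        push_cast
        ring
      rw [hFdef]
      simp only [hexp1, mul_one]
      push_cast
      ring
    -- lower bounds for range products
    have hrange : ∀ N : ℕ, C ≤ ∏ i ∈ Finset.range N, ‖F i‖ := by
      intro N
      rcases le_or_gt N k with h | h
      · have hone : ∀ i ∈ Finset.range N, ‖F i‖ = 1 := by
          intro i hi
          rw [hFone i (by simp at hi; omega)]
          simp
        rw [Finset.prod_congr rfl hone, Finset.prod_const_one]
        exact hC1
      · obtain ⟨M, rfl⟩ : ∃ M, N = k + M := ⟨N - k, by omega⟩
        rw [Finset.prod_range_add]
        have h1 : ∀ i ∈ Finset.range k, ‖F i‖ = 1 := by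
          intro i hi
          rw [hFone i (by simp at hi; omega)]
          simp
        rw [Finset.prod_congr rfl h1, Finset.prod_const_one, one_mul]
        have hθ : ∀ m : ℕ, ((a:ℝ)^k / (a:ℝ)^(k+m+1)) = 1 / (a:ℝ)^(m+1) := by
          intro m
          have : (a:ℝ)^(k+m+1) = (a:ℝ)^k * (a:ℝ)^(m+1) := by
            rw [← pow_add]; ring_nf
          rw [this]
          field_simp
        have hcnn : ∀ m : ℕ, 0 ≤ Real.cos (π / (a:ℝ)^(m+1)) := by
          intro m
          apply Real.cos_nonneg_of_mem_Icc
          have hpow : (2:ℝ) ≤ (a:ℝ)^(m+1) := by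
            calc (2:ℝ) ≤ (a:ℝ) := by linarith
              _ ≤ (a:ℝ)^(m+1) := le_self_pow₀ (by linarith) (by omega)
          constructor
          · have h0 : (0:ℝ) ≤ π / (a:ℝ)^(m+1) := by positivity
            linarith
          · rw [div_le_div_iff₀ (by positivity) (by norm_num : (0:ℝ) < 2)]
            nlinarith
        calc C ≤ ∏ m ∈ Finset.range M, Real.cos (π / (a:ℝ)^(m+1)) := cos_prod_ge a ha M
          _ ≤ ∏ m ∈ Finset.range M, ‖F (k + m)‖ := by
            apply Finset.prod_le_prod
            · intro m _; exact hcnn m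
            · intro m _
              have hcarg : π * ((a:ℝ)^k / (a:ℝ)^(k+m+1)) = π / (a:ℝ)^(m+1) := by
                rw [hθ m]; ring
              have hb := factor_abs_ge (φ (k+m+1)) (hφ (k+m+1)).1 (hφ (k+m+1)).2
                ((a:ℝ)^k / (a:ℝ)^(k+m+1)) (by rw [hcarg]; exact hcnn m)
              rw [hcarg] at hb
              exact hb
    -- the abs of the tprod
    have habsP : C ≤ ‖∏' n, F n‖ := by
      by_cases hM : Multipliable F
      · have hP := hM.hasProd
        have habs : HasProd (fun n => ‖F n‖) (‖∏' n, F n‖) :=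
          hP.map (normHom : ℂ →*₀ ℝ) continuous_norm
        refine ge_of_tendsto habs (Filter.Eventually.of_forall ?_)
        intro s
        obtain ⟨N, hN⟩ := s.exists_nat_subset_range
        calc C ≤ ∏ i ∈ Finset.range N, ‖F i‖ := hrange N
          _ ≤ ∏ i ∈ s, ‖F i‖ := by
            rw [← Finset.prod_sdiff hN]
            exact mul_le_of_le_one_left (Finset.prod_nonneg fun i _ => hFnn i)
              (Finset.prod_le_one (fun i _ => hFnn i) (fun i _ => hFle1 i))
      · rw [tprod_eq_one_of_not_multipliable hM]
        simpa using hC1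
    calc C ^ 2 ≤ ‖∏' n, F n‖ ^ 2 := pow_le_pow_left₀ hCpos.le habsP 2
      _ = _ := rfl
  refine ⟨main, by positivity, ?_⟩
  intro hT
  have hu : Tendsto (fun j : ℕ => ((a:ℝ)^j)) atTop atTop :=
    tendsto_pow_atTop_atTop_of_one_lt (by linarith)
  have hc : Tendsto (fun j : ℕ => ∫ x : ℝ, Complex.exp
      (2 * (π : ℂ) * Complex.I * ((((a:ℝ)^j : ℝ)) : ℂ) * (x : ℂ)) ∂μ) atTop (nhds 0) :=
    hT.comp (hu.mono_right _root_.atTop_le_cocompact)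
  have habs : Tendsto (fun j : ℕ => ‖(∫ x : ℝ, Complex.exp
      (2 * (π : ℂ) * Complex.I * ((((a:ℝ)^j : ℝ)) : ℂ) * (x : ℂ)) ∂μ)‖ ^ 2) atTop (nhds 0) := by
    have h1 := (continuous_norm.tendsto 0).comp hc
    have h2 := h1.pow 2
    simpa using h2
  have hpos : 0 < (4 / π ^ 2) * Real.cos (π / a) ^ 2 := by positivity
  obtain ⟨j, hj1, hj2⟩ := ((habs.eventually_lt_const hpos).and (eventually_ge_atTop 1)).exists
  exact absurd (main j hj2) (not_le.mpr hj1)
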